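/- Let ρ, σ be full-rank density operators on a finite-dimensional Hilbert space such that ρ^{-1/2}σρ^{-1/2} has a non-degenerate maximal eigenvalue. Then for every x with 0 ≤ x ≤ λ_min(ρ), β_{1−x}(ρ‖σ) = x · exp(−D_{+∞}(ρ‖σ)), where D_{+∞}(ρ‖σ) := log λ_max(σ^{-1/2}ρσ^{-1/2}). -/

import Mathlib

open Matrix Filter
open scoped Matrix ComplexOrder

variable {n : Type*} [Fintype n] [DecidableEq n]

/-- `ρ` is a density operator: positive semidefinite with unit trace. -/
def IsDensity (ρ : Matrix n n ℂ) : Prop := ρ.PosSemidef ∧ ρ.trace = 1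

/-- Optimal type-II error `β_x(ρ‖σ)` in binary quantum hypothesis testing:
the minimum of `Tr(σQ)` over tests `0 ≤ Q ≤ 1` with `Tr(ρQ) ≥ 1 − x`. -/
noncomputable def betaErr (x : ℝ) (ρ σ : Matrix n n ℂ) : ℝ :=
  sInf {v : ℝ | ∃ Q : Matrix n n ℂ, Q.PosSemidef ∧ (1 - Q).PosSemidef ∧
    1 - x ≤ ((ρ * Q).trace).re ∧ v = ((σ * Q).trace).re}

open Classical in
/-- Real power of a Hermitian matrix via the spectral decomposition. -/
noncomputable def hrpow (A : Matrix n n ℂ) (α : ℝ) : Matrix n n ℂ :=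
  if h : A.IsHermitian then
    (h.eigenvectorUnitary : Matrix n n ℂ) *
      Matrix.diagonal (fun i => ((h.eigenvalues i ^ α : ℝ) : ℂ)) *
      star (h.eigenvectorUnitary : Matrix n n ℂ)
  else A

open Classical in
/-- Minimal eigenvalue of a Hermitian matrix. -/
noncomputable def lamMin (A : Matrix n n ℂ) : ℝ :=
  if h : A.IsHermitian then ⨅ i, h.eigenvalues i else 0

open Classical in
/-- Maximal eigenvalue of a Hermitian matrix. -/
noncomputable def lamMax (A : Matrix n n ℂ) : ℝ :=
  if h : A.IsHermitian then ⨆ i, h.eigenvalues i else 0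

open Classical in
/-- Pinching map `P_σ(X)` with respect to the eigenspaces of `σ`:
in the eigenbasis of `σ`, off-diagonal blocks between distinct eigenvalues are erased. -/
noncomputable def pinch (σ X : Matrix n n ℂ) : Matrix n n ℂ :=
  if h : σ.IsHermitian then
    (h.eigenvectorUnitary : Matrix n n ℂ) *
      (Matrix.of fun i j =>
        if h.eigenvalues i = h.eigenvalues j then
          (star (h.eigenvectorUnitary : Matrix n n ℂ) * X *
            (h.eigenvectorUnitary : Matrix n n ℂ)) i j
        else 0) *
      star (h.eigenvectorUnitary : Matrix n n ℂ)
  else X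

/-- Trace distance `T(A,B) = (1/2)‖A − B‖₁`. -/
noncomputable def traceDist (A B : Matrix n n ℂ) : ℝ :=
  (1 / 2) * ((((Matrix.posSemidef_conjTranspose_mul_self (A - B)).1.eigenvectorUnitary : Matrix n n ℂ) *
    Matrix.diagonal (fun i => ((Real.sqrt ((Matrix.posSemidef_conjTranspose_mul_self (A - B)).1.eigenvalues i) : ℝ) : ℂ)) *
    star ((Matrix.posSemidef_conjTranspose_mul_self (A - B)).1.eigenvectorUnitary : Matrix n n ℂ)).trace).re

/-- `n`-fold tensor (Kronecker) power of a matrix. -/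
noncomputable def tensorPow {d : ℕ} (ρ : Matrix (Fin d) (Fin d) ℂ) (m : ℕ) :
    Matrix (Fin m → Fin d) (Fin m → Fin d) ℂ :=
  fun f g => ∏ i, ρ (f i) (g i)

/-- A quantum channel from a `d₁`- to a `d₂`-dimensional system, presented by
Kraus operators (equivalently, a completely positive trace-preserving map). -/
structure QChannel (d₁ d₂ : ℕ) where
  k : ℕ
  K : Fin k → Matrix (Fin d₂) (Fin d₁) ℂ
  tp : ∑ i, (K i)ᴴ * K i = 1

/-- Action of a quantum channel on a matrix. -/
noncomputable def QChannel.apply {d₁ d₂ : ℕ} (E : QChannel d₁ d₂)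
    (X : Matrix (Fin d₁) (Fin d₁) ℂ) : Matrix (Fin d₂) (Fin d₂) ℂ :=
  ∑ i, E.K i * X * (E.K i)ᴴ

/-- Classical Rényi relative entropy of a (commuting) pair of matrices,
`D_α(A‖B) = (1/(α−1)) ln Tr(A^α B^{1−α})`. -/
noncomputable def renyiDiv (α : ℝ) (A B : Matrix n n ℂ) : ℝ :=
  (α - 1)⁻¹ * Real.log (((hrpow A α * hrpow B (1 - α)).trace).re)

/-- Minimal (sandwiched) Rényi relative entropy, `α ≤ 1/2` branch:
`D̃_α(ρ‖σ) = (1/(α−1)) ln Tr((√σ ρ^{α/(1−α)} √σ)^{1−α})`. -/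
noncomputable def minRenyiDiv (α : ℝ) (ρ σ : Matrix n n ℂ) : ℝ :=
  (α - 1)⁻¹ * Real.log
    (((hrpow (hrpow σ (1 / 2) * hrpow ρ (α / (1 - α)) * hrpow σ (1 / 2)) (1 - α)).trace).re)

section Helpers
open Matrix
open scoped Matrix ComplexOrder
variable {n : Type*} [Fintype n] [DecidableEq n]
set_option linter.unusedSectionVars false
set_option linter.unusedTactic false
set_option maxHeartbeats 1000000

lemma psd_smul_real {A : Matrix n n ℂ} (hA : A.PosSemidef) {c : ℝ} (hc : 0 ≤ c) :
    ((c:ℂ) • A).PosSemidef := by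
  refine PosSemidef.of_dotProduct_mulVec_nonneg ?_ fun x => ?_
  · unfold Matrix.IsHermitian
    rw [conjTranspose_smul, hA.1, Complex.star_def, Complex.conj_ofReal]
  · rw [smul_mulVec, dotProduct_smul]
    exact smul_nonneg (by exact_mod_cast Complex.zero_le_real.mpr hc) (hA.dotProduct_mulVec_nonneg x)

lemma trace_mul_vecMulVec (A : Matrix n n ℂ) (u : n → ℂ) :
    (A * vecMulVec u (star u)).trace = star u ⬝ᵥ (A *ᵥ u) := by
  simp only [Matrix.trace, Matrix.diag, Matrix.mul_apply, vecMulVec_apply, dotProduct, mulVec,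
    Pi.star_apply, Finset.mul_sum]
  exact Finset.sum_congr rfl fun i _ => Finset.sum_congr rfl fun j _ => by ring

lemma vecMulVec_psd (u : n → ℂ) : (vecMulVec u (star u)).PosSemidef := by
  have h : vecMulVec u (star u) = (replicateRow Unit (star u))ᴴ * replicateRow Unit (star u) := by
    ext i j
    simp [vecMulVec_apply, Matrix.mul_apply, Matrix.replicateRow, conjTranspose_apply]
  rw [h]
  exact posSemidef_conjTranspose_mul_self _

lemma vecMulVec_mul_self (u : n → ℂ) :
    vecMulVec u (star u) * vecMulVec u (star u) = (star u ⬝ᵥ u) • vecMulVec u (star u) := by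
  ext i j
  simp only [Matrix.mul_apply, vecMulVec_apply, Matrix.smul_apply, dotProduct, Pi.star_apply,
    smul_eq_mul, Finset.sum_mul, Finset.mul_sum]
  exact Finset.sum_congr rfl fun k _ => by ring

lemma dot_conj (A B : Matrix n n ℂ) (v : n → ℂ) :
    star (B *ᵥ v) ⬝ᵥ (A *ᵥ (B *ᵥ v)) = star v ⬝ᵥ ((Bᴴ * A * B) *ᵥ v) := by
  rw [star_mulVec, mulVec_mulVec, dotProduct_mulVec, vecMul_vecMul, ← dotProduct_mulVec,
    ← mul_assoc]

lemma star_dot_self_eq_re (u : n → ℂ) : star u ⬝ᵥ u = ((star u ⬝ᵥ u).re : ℂ) := by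
  have h := dotProduct_star_self_nonneg u
  rw [Complex.nonneg_iff] at h
  exact Complex.ext rfl (by simpa using h.2.symm)

lemma one_sub_vecMulVec_psd (u : n → ℂ) (h : (star u ⬝ᵥ u).re ≤ 1) :
    (1 - vecMulVec u (star u)).PosSemidef := by
  set t : ℝ := (star u ⬝ᵥ u).re with ht
  have htc : star u ⬝ᵥ u = (t : ℂ) := star_dot_self_eq_re u
  have ht0 : 0 ≤ t := by
    have := dotProduct_star_self_nonneg u
    rw [Complex.nonneg_iff] at this; exact this.1
  rcases eq_or_lt_of_le ht0 with h0 | hpos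
  · have hu : u = 0 := by
      have : star u ⬝ᵥ u = 0 := by rw [htc, ← h0]; simp
      exact (dotProduct_star_self_eq_zero (v := u)).mp this
    have hz : vecMulVec (0 : n → ℂ) (star (0 : n → ℂ)) = 0 := by
      ext i j; simp [vecMulVec_apply]
    rw [hu, hz, sub_zero]
    exact Matrix.PosSemidef.one
  · set V := vecMulVec u (star u) with hV
    set P : Matrix n n ℂ := ((t⁻¹ : ℝ) : ℂ) • V with hP
    have hPpsd : P.PosSemidef := psd_smul_real (vecMulVec_psd u) (inv_nonneg.mpr ht0)
    have hVP : ((t : ℝ) : ℂ) • P = V := by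
      rw [hP, smul_smul, ← Complex.ofReal_mul, mul_inv_cancel₀ hpos.ne', Complex.ofReal_one,
        one_smul]
    have hPP : P * P = P := by
      rw [hP, smul_mul_smul_comm, vecMulVec_mul_self, ← hV, htc, smul_smul]
      congr 1
      push_cast
      field_simp
    have h1P : (1 - P).PosSemidef := by
      have key : (1 - P)ᴴ * (1 - P) = 1 - P := by
        rw [conjTranspose_sub, conjTranspose_one, hPpsd.1]
        rw [mul_sub, sub_mul, sub_mul, hPP]
        simp
      rw [← key]
      exact posSemidef_conjTranspose_mul_self _
    have hsplit : 1 - V = (1 - P) + ((1 - t : ℝ) : ℂ) • P := by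
      rw [← hVP]
      push_cast
      rw [sub_smul, one_smul]
      abel
    rw [hsplit]
    exact h1P.add (psd_smul_real hPpsd (by linarith))

lemma psd_diag_entry_re_nonneg {A : Matrix n n ℂ} (hA : A.PosSemidef) (i : n) :
    0 ≤ (A i i).re := by
  have h := hA.dotProduct_mulVec_nonneg (Pi.single i 1)
  have e : star (Pi.single i 1 : n → ℂ) ⬝ᵥ (A *ᵥ Pi.single i 1) = A i i := by
    simp [dotProduct, mulVec, Pi.single_apply, Finset.sum_ite_eq, apply_ite]
  rw [e] at h
  exact (Complex.le_def.mp h).1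

lemma psd_trace_re_nonneg {A : Matrix n n ℂ} (hA : A.PosSemidef) : 0 ≤ A.trace.re := by
  rw [Matrix.trace, Complex.re_sum]
  exact Finset.sum_nonneg fun i _ => psd_diag_entry_re_nonneg hA i

lemma trace_mul_psd_re_nonneg {A B : Matrix n n ℂ} (hA : A.PosSemidef) (hB : B.PosSemidef) :
    0 ≤ ((A * B).trace).re := by
  open scoped MatrixOrder in
  obtain ⟨C, rfl⟩ := CStarAlgebra.nonneg_iff_eq_star_mul_self.mp hA.nonneg
  have h2 : (star C * C * B).trace = (C * B * Cᴴ).trace := by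
    rw [mul_assoc, trace_mul_comm, star_eq_conjTranspose]
  rw [h2]
  exact psd_trace_re_nonneg (hB.mul_mul_conjTranspose_same C)

lemma smul_one_sub_psd {A : Matrix n n ℂ} (hA : A.IsHermitian) {c : ℝ}
    (h : ∀ i, hA.eigenvalues i ≤ c) : ((c:ℂ) • 1 - A).PosSemidef := by
  have hU : (hA.eigenvectorUnitary : Matrix n n ℂ) * star (hA.eigenvectorUnitary : Matrix n n ℂ) = 1 :=
    (Matrix.mem_unitaryGroup_iff).mp hA.eigenvectorUnitary.2
  have e : (c:ℂ) • 1 - A =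
      (hA.eigenvectorUnitary : Matrix n n ℂ) *
        Matrix.diagonal (fun i => ((c - hA.eigenvalues i : ℝ) : ℂ)) *
        (hA.eigenvectorUnitary : Matrix n n ℂ)ᴴ := by
    conv_lhs => rw [hA.spectral_theorem, Unitary.conjStarAlgAut_apply]
    rw [← Matrix.star_eq_conjTranspose]
    have : ((c:ℂ) • (1 : Matrix n n ℂ)) =
        (hA.eigenvectorUnitary : Matrix n n ℂ) * ((c:ℂ) • 1) *
          star (hA.eigenvectorUnitary : Matrix n n ℂ) := by
      rw [mul_smul_comm, mul_one, smul_mul_assoc, hU]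
    rw [this, ← sub_mul, ← mul_sub]
    congr 2
    rw [smul_one_eq_diagonal, diagonal_sub]
    congr 1
    ext i
    push_cast
    simp
  rw [e]
  exact (Matrix.PosSemidef.diagonal (fun i => by
    simpa using Complex.zero_le_real.mpr (sub_nonneg.mpr (h i)))).mul_mul_conjTranspose_same _

lemma sub_smul_one_psd {A : Matrix n n ℂ} (hA : A.IsHermitian) {c : ℝ}
    (h : ∀ i, c ≤ hA.eigenvalues i) : (A - (c:ℂ) • 1).PosSemidef := by
  have hU : (hA.eigenvectorUnitary : Matrix n n ℂ) * star (hA.eigenvectorUnitary : Matrix n n ℂ) = 1 :=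
    (Matrix.mem_unitaryGroup_iff).mp hA.eigenvectorUnitary.2
  have e : A - (c:ℂ) • 1 =
      (hA.eigenvectorUnitary : Matrix n n ℂ) *
        Matrix.diagonal (fun i => ((hA.eigenvalues i - c : ℝ) : ℂ)) *
        (hA.eigenvectorUnitary : Matrix n n ℂ)ᴴ := by
    conv_lhs => rw [hA.spectral_theorem, Unitary.conjStarAlgAut_apply]
    rw [← Matrix.star_eq_conjTranspose]
    have : ((c:ℂ) • (1 : Matrix n n ℂ)) =
        (hA.eigenvectorUnitary : Matrix n n ℂ) * ((c:ℂ) • 1) *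
          star (hA.eigenvectorUnitary : Matrix n n ℂ) := by
      rw [mul_smul_comm, mul_one, smul_mul_assoc, hU]
    rw [this, ← sub_mul, ← mul_sub]
    congr 2
    rw [smul_one_eq_diagonal, diagonal_sub]
    congr 1
    ext i
    push_cast
    simp
  rw [e]
  exact (Matrix.PosSemidef.diagonal (fun i => by
    simpa using Complex.zero_le_real.mpr (sub_nonneg.mpr (h i)))).mul_mul_conjTranspose_same _

lemma diag_herm_aux (f : n → ℝ) :
    (Matrix.diagonal (fun i => ((f i : ℝ) : ℂ)))ᴴ = Matrix.diagonal (fun i => ((f i : ℝ) : ℂ)) := by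
  rw [diagonal_conjTranspose]
  exact congrArg Matrix.diagonal (funext fun i => by
    simp [Function.comp, Complex.star_def, Complex.conj_ofReal])

lemma hrpow_herm {A : Matrix n n ℂ} (hA : A.IsHermitian) (α : ℝ) :
    (hrpow A α).IsHermitian := by
  rw [hrpow, dif_pos hA]
  show _ᴴ = _
  simp only [star_eq_conjTranspose, conjTranspose_mul, conjTranspose_conjTranspose,
    diag_herm_aux, mul_assoc]

lemma hrpow_mul_hrpow {A : Matrix n n ℂ} (hA : A.PosDef) (a b : ℝ) :
    hrpow A a * hrpow A b = hrpow A (a + b) := by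
  have h2 : star (hA.1.eigenvectorUnitary : Matrix n n ℂ) * (hA.1.eigenvectorUnitary : Matrix n n ℂ) = 1 :=
    (Matrix.mem_unitaryGroup_iff').mp hA.1.eigenvectorUnitary.2
  have h3 : ∀ X : Matrix n n ℂ, star (hA.1.eigenvectorUnitary : Matrix n n ℂ) *
      ((hA.1.eigenvectorUnitary : Matrix n n ℂ) * X) = X := fun X => by
    rw [← mul_assoc, h2, one_mul]
  rw [hrpow, hrpow, hrpow, dif_pos hA.1, dif_pos hA.1, dif_pos hA.1]
  simp only [mul_assoc]
  rw [h3, ← mul_assoc (Matrix.diagonal _) (Matrix.diagonal _), diagonal_mul_diagonal]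
  have : (fun i => ((hA.1.eigenvalues i ^ a : ℝ):ℂ) * ((hA.1.eigenvalues i ^ b : ℝ):ℂ)) =
      fun i => ((hA.1.eigenvalues i ^ (a + b) : ℝ):ℂ) := by
    funext i
    rw [← Complex.ofReal_mul, ← Real.rpow_add (hA.eigenvalues_pos i)]
  rw [this]

lemma hrpow_zero {A : Matrix n n ℂ} (hA : A.IsHermitian) : hrpow A 0 = 1 := by
  rw [hrpow, dif_pos hA]
  have hU : (hA.eigenvectorUnitary : Matrix n n ℂ) * star (hA.eigenvectorUnitary : Matrix n n ℂ) = 1 :=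
    (Matrix.mem_unitaryGroup_iff).mp hA.eigenvectorUnitary.2
  simp only [Real.rpow_zero, Complex.ofReal_one, diagonal_one, mul_one, hU]

lemma hrpow_one {A : Matrix n n ℂ} (hA : A.IsHermitian) : hrpow A 1 = A := by
  rw [hrpow, dif_pos hA]
  have : (fun i => ((hA.eigenvalues i ^ (1:ℝ) : ℝ):ℂ)) = RCLike.ofReal ∘ hA.eigenvalues := by
    funext i; simp [Real.rpow_one]
  rw [this]
  exact hA.spectral_theorem.symm

end Helpers

/-- Single-shot extreme-deviation hypothesis testing, high-error branch:
for `0 ≤ x ≤ λ_min(ρ)`, `β_{1−x}(ρ‖σ) = x·exp(−D_{+∞}(ρ‖σ))` where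
`D_{+∞}(ρ‖σ) = ln λ_max(σ^{-1/2}ρσ^{-1/2})`. -/
theorem betaErr_one_sub_eq {d : ℕ} (hd : 0 < d) (ρ σ : Matrix (Fin d) (Fin d) ℂ)
    (hρ : ρ.PosDef) (hσ : σ.PosDef) (hρtr : ρ.trace = 1) (hσtr : σ.trace = 1)
    (hM : (hrpow ρ (-(1 / 2)) * σ * hrpow ρ (-(1 / 2))).IsHermitian)
    (hnd : ∃! i : Fin d, hM.eigenvalues i = ⨆ j, hM.eigenvalues j)
    (x : ℝ) (hx0 : 0 ≤ x) (hx : x ≤ lamMin ρ) :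
    betaErr (1 - x) ρ σ =
      x * Real.exp (-(Real.log (lamMax (hrpow σ (-(1 / 2)) * ρ * hrpow σ (-(1 / 2)))))) := by
  classical
  have hσH : σ.IsHermitian := hσ.1
  have hρH : ρ.IsHermitian := hρ.1
  set N := hrpow σ (-(1 / 2)) with hNdef
  set S := hrpow σ (1 / 2) with hSdef
  have hN : N.IsHermitian := hrpow_herm hσH _
  have hS : S.IsHermitian := hrpow_herm hσH _
  have e0 : (1 / 2 : ℝ) + -(1 / 2) = 0 := by norm_num
  have e0' : (-(1 / 2) : ℝ) + 1 / 2 = 0 := by norm_num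
  have e1 : (1 / 2 : ℝ) + 1 / 2 = 1 := by norm_num
  have hSN : S * N = 1 := by
    rw [hSdef, hNdef, hrpow_mul_hrpow hσ, e0, hrpow_zero hσH]
  have hNS : N * S = 1 := by
    rw [hSdef, hNdef, hrpow_mul_hrpow hσ, e0', hrpow_zero hσH]
  have hSS : S * S = σ := by
    rw [hSdef, hrpow_mul_hrpow hσ, e1, hrpow_one hσH]
  set M := N * ρ * N with hMdef
  have hMH : M.IsHermitian := by
    show Mᴴ = M
    rw [hMdef, conjTranspose_mul, conjTranspose_mul, hN.eq, hρH.eq, ← mul_assoc]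
  have hSMS : S * M * S = ρ := by
    rw [hMdef, ← mul_assoc, ← mul_assoc, hSN, one_mul, mul_assoc, hNS, mul_one]
  have hMpd : M.PosDef := by
    refine PosDef.of_dotProduct_mulVec_pos hMH fun z hz => ?_
    have hNz : N *ᵥ z ≠ 0 := by
      intro h0
      apply hz
      have : (S * N) *ᵥ z = 0 := by rw [← mulVec_mulVec, h0, mulVec_zero]
      rwa [hSN, one_mulVec] at this
    have hpos := hρ.dotProduct_mulVec_pos hNz
    rwa [dot_conj ρ N z, hN.eq, ← hMdef] at hpos
  set L := lamMax M with hLdef0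
  have hLdef : L = ⨆ i, hMH.eigenvalues i := by rw [hLdef0, lamMax, dif_pos hMH]
  have hne : Nonempty (Fin d) := ⟨⟨0, hd⟩⟩
  obtain ⟨i₀, hi₀⟩ := exists_eq_ciSup_of_finite (f := hMH.eigenvalues)
  have hLpos : 0 < L := by
    rw [hLdef, ← hi₀]
    exact hMpd.eigenvalues_pos i₀
  have hLe : ∀ i, hMH.eigenvalues i ≤ L := fun i =>
    hLdef ▸ le_ciSup (Set.Finite.bddAbove (Set.finite_range _)) i
  have K1 : ((L:ℂ) • σ - ρ).PosSemidef := by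
    have e2 : (L:ℂ) • σ - ρ = S * ((L:ℂ) • 1 - M) * Sᴴ := by
      rw [hS.eq, mul_sub, sub_mul, mul_smul_comm, mul_one, smul_mul_assoc, hSS, hSMS]
    rw [e2]
    exact (smul_one_sub_psd hMH hLe).mul_mul_conjTranspose_same S
  set v : Fin d → ℂ := ⇑(hMH.eigenvectorBasis i₀) with hvdef
  have hv : M *ᵥ v = (L:ℂ) • v := by
    have h := hMH.mulVec_eigenvectorBasis i₀
    rw [hi₀, ← hLdef] at h
    rw [hvdef, h]
    funext j
    simp [Complex.real_smul]
  have hvv : star v ⬝ᵥ v = 1 := by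
    have h := orthonormal_iff_ite.mp hMH.eigenvectorBasis.orthonormal i₀ i₀
    rw [EuclideanSpace.inner_eq_star_dotProduct, if_pos rfl, dotProduct_comm] at h
    exact h
  set w := N *ᵥ v with hwdef
  have hσN : σ * N = S := by rw [← hSS, mul_assoc, hSN, mul_one]
  have hNσ : N * σ = S := by rw [← hSS, ← mul_assoc, hNS, one_mul]
  have hσw : σ *ᵥ w = S *ᵥ v := by rw [hwdef, mulVec_mulVec, hσN]
  have hρN : ρ * N = S * M := by
    rw [← hSMS, mul_assoc, hSN, mul_one]
  have hρw : ρ *ᵥ w = (L:ℂ) • (S *ᵥ v) := by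
    rw [hwdef, mulVec_mulVec, hρN, ← mulVec_mulVec, hv, mulVec_smul]
  have hwσw : star w ⬝ᵥ (σ *ᵥ w) = 1 := by
    rw [hwdef, dot_conj, hN.eq]
    have hone : N * σ * N = 1 := by rw [hNσ, hSN]
    rw [hone, one_mulVec, hvv]
  have hwρw : star w ⬝ᵥ (ρ *ᵥ w) = (L:ℂ) := by
    rw [hρw, dotProduct_smul, ← hσw, hwσw, smul_eq_mul, mul_one]
  have hm : (ρ - ((lamMin ρ : ℝ):ℂ) • 1).PosSemidef := by
    apply sub_smul_one_psd hρH
    intro i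
    rw [lamMin, dif_pos hρH]
    exact ciInf_le (Set.Finite.bddBelow (Set.finite_range _)) i
  set wsq := (star w ⬝ᵥ w).re with hwsqdef
  have hwsq0 : 0 ≤ wsq :=
    (Complex.nonneg_iff.mp (dotProduct_star_self_nonneg w)).1
  have him : (star w ⬝ᵥ w).im = 0 :=
    (Complex.nonneg_iff.mp (dotProduct_star_self_nonneg w)).2.symm
  have hxw : x * wsq ≤ L := by
    have h2 := hm.dotProduct_mulVec_nonneg w
    have h3 : star w ⬝ᵥ ((ρ - ((lamMin ρ : ℝ):ℂ) • 1) *ᵥ w)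
        = (L:ℂ) - ((lamMin ρ : ℝ):ℂ) * (star w ⬝ᵥ w) := by
      rw [sub_mulVec, dotProduct_sub, hwρw, smul_mulVec, one_mulVec, dotProduct_smul,
        smul_eq_mul]
    rw [h3] at h2
    have h4 := (Complex.le_def.mp h2).1
    simp only [Complex.zero_re, Complex.sub_re, Complex.mul_re, Complex.ofReal_re,
      Complex.ofReal_im, him, mul_zero, zero_mul, sub_zero] at h4
    have h5 : lamMin ρ * wsq ≤ L := by rw [hwsqdef]; linarith
    have h6 : x * wsq ≤ lamMin ρ * wsq := mul_le_mul_of_nonneg_right hx hwsq0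
    linarith
  -- the optimal test
  set c := x / L with hcdef
  have hc0 : 0 ≤ c := div_nonneg hx0 hLpos.le
  set u : Fin d → ℂ := ((Real.sqrt c : ℝ):ℂ) • w with hudef
  have keyA : ∀ A : Matrix (Fin d) (Fin d) ℂ,
      star u ⬝ᵥ (A *ᵥ u) = (c:ℂ) * (star w ⬝ᵥ (A *ᵥ w)) := by
    intro A
    rw [hudef, star_smul, smul_dotProduct, mulVec_smul, dotProduct_smul, smul_smul,
      Complex.star_def, Complex.conj_ofReal, ← Complex.ofReal_mul,
      Real.mul_self_sqrt hc0, smul_eq_mul]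
  have huu : (star u ⬝ᵥ u).re = c * wsq := by
    have h := keyA 1
    simp only [one_mulVec] at h
    rw [h, Complex.re_ofReal_mul, hwsqdef]
  have hcw1 : c * wsq ≤ 1 := by
    rw [hcdef, div_mul_eq_mul_div, div_le_one hLpos]
    exact hxw
  have hmem : x / L ∈ {v : ℝ | ∃ Q : Matrix (Fin d) (Fin d) ℂ, Q.PosSemidef ∧
      (1 - Q).PosSemidef ∧ 1 - (1 - x) ≤ ((ρ * Q).trace).re ∧ v = ((σ * Q).trace).re} := by
    refine ⟨vecMulVec u (star u), vecMulVec_psd u,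
      one_sub_vecMulVec_psd u (by rw [huu]; exact hcw1), ?_, ?_⟩
    · rw [trace_mul_vecMulVec, keyA ρ, hwρw]
      have : ((c:ℂ) * (L:ℂ)).re = c * L := by
        rw [← Complex.ofReal_mul, Complex.ofReal_re]
      rw [this, hcdef, div_mul_cancel₀ x hLpos.ne']
      linarith
    · rw [trace_mul_vecMulVec, keyA σ, hwσw, mul_one, Complex.ofReal_re, hcdef]
  have hlb : ∀ y ∈ {v : ℝ | ∃ Q : Matrix (Fin d) (Fin d) ℂ, Q.PosSemidef ∧
      (1 - Q).PosSemidef ∧ 1 - (1 - x) ≤ ((ρ * Q).trace).re ∧ v = ((σ * Q).trace).re},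
      x / L ≤ y := by
    rintro y ⟨Q, hQp, hQ1, hQtr, rfl⟩
    have h0 : 0 ≤ ((((L:ℂ) • σ - ρ) * Q).trace).re := trace_mul_psd_re_nonneg K1 hQp
    have e3 : (((L:ℂ) • σ - ρ) * Q).trace = (L:ℂ) * (σ * Q).trace - (ρ * Q).trace := by
      rw [sub_mul, trace_sub, smul_mul_assoc, trace_smul, smul_eq_mul]
    rw [e3] at h0
    have h0' : 0 ≤ L * ((σ * Q).trace).re - ((ρ * Q).trace).re := by
      simpa [Complex.sub_re, Complex.re_ofReal_mul] using h0
    rw [div_le_iff₀ hLpos]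
    nlinarith
  rw [betaErr]
  have hinf : sInf {v : ℝ | ∃ Q : Matrix (Fin d) (Fin d) ℂ, Q.PosSemidef ∧
      (1 - Q).PosSemidef ∧ 1 - (1 - x) ≤ ((ρ * Q).trace).re ∧ v = ((σ * Q).trace).re}
      = x / L := IsLeast.csInf_eq ⟨hmem, hlb⟩
  rw [hinf, Real.exp_neg, Real.exp_log hLpos, div_eq_mul_inv]
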